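/- Let G be a finite group of order n and v ∈ F_q[G]. Then G is isomorphic to a subgroup of the permutation automorphism group PAut(C(v)) of the code C(v) generated by the rows of the G-matrix σ_G(v). In particular, |PAut(C(v))| is a multiple of n. -/

import Mathlib

/-- `G` is isomorphic to a subgroup of the permutation automorphism group of the code `C(v)`
generated by the rows of σ_G(v) (the row indexed by `g` being `h ↦ v (g⁻¹ * h)`); in
particular `|PAut(C(v))|` is a multiple of `|G|`. -/
theorem group_embeds_in_paut (F : Type*) [Field F] [Fintype F] (G : Type*) [Group G]
    [Fintype G] [DecidableEq G] (v : MonoidAlgebra F G)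
    (C : Submodule F (G → F))
    (hC : C = Submodule.span F (Set.range fun g : G => fun h : G => v.coeff (g⁻¹ * h))) :
    (∃ φ : G →* Equiv.Perm G, Function.Injective φ ∧
        ∀ h : G, ∀ c ∈ C, (fun i => c (φ h i)) ∈ C) ∧
      ∃ m : ℕ, Nat.card {π : Equiv.Perm G // ∀ c ∈ C, (fun i => c (π i)) ∈ C} =
        Fintype.card G * m := by
  classical
  set P : Equiv.Perm G → Prop := fun π => ∀ c ∈ C, (fun i => c (π i)) ∈ C with hP
  -- preservation under composition with an arbitrary permutation is via funLeft
  have key : ∀ (π : Equiv.Perm G) (c : G → F), (fun i => c (π i)) = LinearMap.funLeft F F π c :=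
    fun _ _ => rfl
  -- left multiplication preserves C
  have hleft : ∀ h : G, P (MulAction.toPermHom G G h) := by
    intro h c hc
    have : (fun i => c (h * i)) ∈ C := by
      rw [hC] at hc ⊢
      have hmem : LinearMap.funLeft F F (MulAction.toPermHom G G h) c ∈
          Submodule.map (LinearMap.funLeft F F (MulAction.toPermHom G G h))
            (Submodule.span F (Set.range fun g : G => fun h : G => v.coeff (g⁻¹ * h))) :=
        Submodule.mem_map_of_mem hc
      rw [Submodule.map_span] at hmem
      refine Submodule.span_mono ?_ (show _ ∈ _ from hmem)
      rintro x ⟨y, ⟨g, rfl⟩, rfl⟩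
      exact ⟨h⁻¹ * g, by funext i; simp [LinearMap.funLeft, mul_assoc]⟩
    exact this
  -- the set of code-preserving permutations is a subgroup
  have hmul : ∀ π σ : Equiv.Perm G, P π → P σ → P (π * σ) := by
    intro π σ hπ hσ c hc
    exact hσ _ (hπ c hc)
  have hinv : ∀ π : Equiv.Perm G, P π → P π⁻¹ := by
    intro π hπ c hc
    -- the map on the finite set C induced by π is injective hence surjective
    have hfin : Finite C := by infer_instance
    let T : C → C := fun d => ⟨fun i => d.1 (π i), hπ d.1 d.2⟩
    have hTinj : Function.Injective T := by
      intro a b hab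
      ext i
      have := congrFun (congrArg Subtype.val hab) (π⁻¹ i)
      simpa [T] using this
    have hTsurj : Function.Surjective T := Finite.surjective_of_injective hTinj
    obtain ⟨d, hd⟩ := hTsurj ⟨c, hc⟩
    have hd' : (fun i => d.1 (π i)) = c := congrArg Subtype.val hd
    have : (fun i => c (π⁻¹ i)) = d.1 := by
      funext i
      have := congrFun hd' (π⁻¹ i)
      simpa using this.symm
    rw [this]; exact d.2
  let H : Subgroup (Equiv.Perm G) :=
    { carrier := setOf P
      one_mem' := fun c hc => hc
      mul_mem' := fun {a b} ha hb => hmul a b ha hb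
      inv_mem' := fun {a} ha => hinv a ha }
  have hone : P 1 := fun c hc => hc
  constructor
  · exact ⟨MulAction.toPermHom G G, MulAction.toPerm_injective (α := G) (β := G), hleft⟩
  · -- Lagrange
    have hK : (MulAction.toPermHom G G).range ≤ H := by
      rintro π ⟨h, rfl⟩
      exact hleft h
    have hdvd : Nat.card (MulAction.toPermHom G G).range ∣ Nat.card H :=
      Subgroup.card_dvd_of_le hK
    have hcard : Nat.card (MulAction.toPermHom G G).range = Fintype.card G := by
      have e1 : ↥(MulAction.toPermHom G G).range ≃ G :=
        (Equiv.subtypeEquivRight (fun x => by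
          simp [MonoidHom.mem_range, Set.mem_range])).trans
          (Equiv.ofInjective _ (MulAction.toPerm_injective (α := G) (β := G))).symm
      rw [Nat.card_congr e1, Nat.card_eq_fintype_card]
    have : Nat.card {π : Equiv.Perm G // ∀ c ∈ C, (fun i => c (π i)) ∈ C} = Nat.card H :=
      Nat.card_congr (Equiv.subtypeEquivRight (fun π => Iff.rfl))
    rw [this, ← hcard]
    exact hdvd
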